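/- The linear map D^N on the (2k+1)-dimensional Heisenberg Lie algebra h_{2k+1} defined by D^N(v) = ((k+1)/(k+2)) v for v in the span of the generators y₁,…,y_{2k} and D^N(z) = 2(k+1)/(k+2) z for z in the center, is a derivation satisfying trace(D^N ∘ F) = trace(F) for every derivation F of h_{2k+1}; i.e., it is a Nikolayevsky derivation of h_{2k+1}. -/

import Mathlib

/-- Brackets of basis vectors of the Heisenberg algebra `h_{2k+1}`:
`[y_i, y_{k+i}] = z` for `i = 1,…,k`, where `y₁,…,y_{2k}` are the first `2k`
coordinate vectors and `z = Pi.single (Fin.last (2*k)) 1` is the last one. -/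
noncomputable def scH (k : ℕ) (i j : Fin (2*k+1)) : Fin (2*k+1) → ℝ :=
  if (i : ℕ) < k ∧ (j : ℕ) = k + (i : ℕ)
  then (Pi.single (Fin.last (2*k)) 1 : Fin (2*k+1) → ℝ) else 0

/-- Skew-symmetrized structure constants of `h_{2k+1}`. -/
noncomputable def bbH (k : ℕ) (i j : Fin (2*k+1)) : Fin (2*k+1) → ℝ :=
  scH k i j - scH k j i

/-- The Heisenberg bracket on `ℝ^{2k+1}`. -/
noncomputable def brH (k : ℕ) (u v : Fin (2*k+1) → ℝ) : Fin (2*k+1) → ℝ :=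
  ∑ i : Fin (2*k+1), ∑ j : Fin (2*k+1), (u i * v j) • bbH k i j

/-- The candidate Nikolayevsky derivation of `h_{2k+1}`: multiplication by
`(k+1)/(k+2)` on the span of the generators and by `2(k+1)/(k+2)` on the center. -/
noncomputable def dNH (k : ℕ) : (Fin (2*k+1) → ℝ) →ₗ[ℝ] (Fin (2*k+1) → ℝ) :=
  LinearMap.pi fun i =>
    (if (i : ℕ) < 2*k then ((k : ℝ)+1)/((k : ℝ)+2) else 2*((k : ℝ)+1)/((k : ℝ)+2)) •
      LinearMap.proj i


/-- structure constant scalar -/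
noncomputable def eH (k : ℕ) (i j : Fin (2*k+1)) : ℝ :=
  (if (i : ℕ) < k ∧ (j : ℕ) = k + (i : ℕ) then (1:ℝ) else 0) -
  (if (j : ℕ) < k ∧ (i : ℕ) = k + (j : ℕ) then (1:ℝ) else 0)

noncomputable def cH (k : ℕ) (u v : Fin (2*k+1) → ℝ) : ℝ :=
  ∑ i : Fin (2*k+1), ∑ j : Fin (2*k+1), u i * v j * eH k i j

lemma bbH_eq (k : ℕ) (i j : Fin (2*k+1)) :
    bbH k i j = eH k i j • (Pi.single (Fin.last (2*k)) 1 : Fin (2*k+1) → ℝ) := by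
  unfold bbH scH eH
  split_ifs <;> simp [sub_smul]

lemma brH_eq (k : ℕ) (u v : Fin (2*k+1) → ℝ) :
    brH k u v = cH k u v • (Pi.single (Fin.last (2*k)) 1 : Fin (2*k+1) → ℝ) := by
  unfold brH cH
  rw [Finset.sum_smul]
  refine Finset.sum_congr rfl fun i _ => ?_
  rw [Finset.sum_smul]
  refine Finset.sum_congr rfl fun j _ => ?_
  rw [bbH_eq, smul_smul]

lemma dNH_apply (k : ℕ) (x : Fin (2*k+1) → ℝ) (i : Fin (2*k+1)) :
    dNH k x i
      = (if (i : ℕ) < 2*k then ((k : ℝ)+1)/((k : ℝ)+2) else 2*((k : ℝ)+1)/((k : ℝ)+2)) * x i := by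
  simp only [dNH, LinearMap.pi_apply]
  split_ifs <;> simp

lemma eH_last_left (k : ℕ) (j : Fin (2*k+1)) (i : Fin (2*k+1)) (hi : ¬ ((i:ℕ) < 2*k)) :
    eH k i j = 0 := by
  unfold eH
  rw [if_neg, if_neg]
  · ring
  · rintro ⟨hj, hij⟩; omega
  · rintro ⟨h1, h2⟩; omega

lemma eH_last_right (k : ℕ) (i : Fin (2*k+1)) (j : Fin (2*k+1)) (hj : ¬ ((j:ℕ) < 2*k)) :
    eH k i j = 0 := by
  unfold eH
  rw [if_neg, if_neg]
  · ring
  · rintro ⟨h1, h2⟩; omega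
  · rintro ⟨h1, h2⟩; omega

lemma cH_dNH_left (k : ℕ) (u v : Fin (2*k+1) → ℝ) :
    cH k (dNH k u) v = (((k:ℝ)+1)/((k:ℝ)+2)) * cH k u v := by
  unfold cH
  rw [Finset.mul_sum]
  refine Finset.sum_congr rfl fun i _ => ?_
  rw [Finset.mul_sum]
  refine Finset.sum_congr rfl fun j _ => ?_
  rw [dNH_apply]
  by_cases hi : (i : ℕ) < 2*k
  · rw [if_pos hi]; ring
  · rw [eH_last_left k j i hi]; ring

lemma cH_dNH_right (k : ℕ) (u v : Fin (2*k+1) → ℝ) :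
    cH k u (dNH k v) = (((k:ℝ)+1)/((k:ℝ)+2)) * cH k u v := by
  unfold cH
  rw [Finset.mul_sum]
  refine Finset.sum_congr rfl fun i _ => ?_
  rw [Finset.mul_sum]
  refine Finset.sum_congr rfl fun j _ => ?_
  rw [dNH_apply]
  by_cases hj : (j : ℕ) < 2*k
  · rw [if_pos hj]; ring
  · rw [eH_last_right k i j hj]; ring

lemma dNH_single_last (k : ℕ) :
    dNH k (Pi.single (Fin.last (2*k)) 1 : Fin (2*k+1) → ℝ)
      = (2*((k:ℝ)+1)/((k:ℝ)+2)) • (Pi.single (Fin.last (2*k)) 1 : Fin (2*k+1) → ℝ) := by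
  funext i
  rw [dNH_apply, Pi.smul_apply, smul_eq_mul, Pi.single_apply]
  by_cases hi : (i : ℕ) < 2*k
  · rw [if_pos hi, if_neg, mul_zero, mul_zero]
    intro h; rw [h] at hi; simp [Fin.last] at hi
  · rw [if_neg hi]

theorem part1 (k : ℕ) (u v : Fin (2*k+1) → ℝ) :
    dNH k (brH k u v) = brH k (dNH k u) v + brH k u (dNH k v) := by
  rw [brH_eq, brH_eq, brH_eq, map_smul, dNH_single_last, cH_dNH_left, cH_dNH_right,
    smul_smul, ← add_smul]
  congr 1
  ring

lemma cH_single_left (k : ℕ) (p : Fin (2*k+1)) (w : Fin (2*k+1) → ℝ) :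
    cH k (Pi.single p 1) w = ∑ j : Fin (2*k+1), w j * eH k p j := by
  unfold cH
  rw [Finset.sum_eq_single p]
  · refine Finset.sum_congr rfl fun j _ => ?_
    rw [Pi.single_eq_same]; ring
  · intro i _ hip
    apply Finset.sum_eq_zero
    intro j _
    rw [Pi.single_eq_of_ne hip]; ring
  · intro h; exact absurd (Finset.mem_univ p) h

lemma trace_eq_sum_diag (n : ℕ) (F : (Fin n → ℝ) →ₗ[ℝ] (Fin n → ℝ)) :
    LinearMap.trace ℝ _ F = ∑ i : Fin n, F (Pi.single i 1) i := by
  rw [LinearMap.trace_eq_matrix_trace ℝ (Pi.basisFun ℝ (Fin n)) F]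
  rw [Matrix.trace]
  refine Finset.sum_congr rfl fun i _ => ?_
  rw [Matrix.diag_apply, LinearMap.toMatrix_eq_toMatrix', LinearMap.toMatrix'_apply]

lemma cH_single_right (k : ℕ) (q : Fin (2*k+1)) (w : Fin (2*k+1) → ℝ) :
    cH k w (Pi.single q 1) = ∑ i : Fin (2*k+1), w i * eH k i q := by
  unfold cH
  refine Finset.sum_congr rfl fun i _ => ?_
  rw [Finset.sum_eq_single q]
  · rw [Pi.single_eq_same]; ring
  · intro j _ hjq; rw [Pi.single_eq_of_ne hjq]; ring
  · intro h; exact absurd (Finset.mem_univ q) h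

lemma eH_right (k m : ℕ) (hm : m < k) (i j : Fin (2*k+1)) (hj : (j:ℕ) = k + m) :
    eH k i j = if (i:ℕ) = m then 1 else 0 := by
  unfold eH
  by_cases h : (i:ℕ) = m
  · rw [if_pos h, if_pos ⟨by omega, by omega⟩, if_neg (by rintro ⟨h1, _⟩; omega)]; ring
  · rw [if_neg h, if_neg (by rintro ⟨h1, h2⟩; omega), if_neg (by rintro ⟨h1, _⟩; omega)]; ring

lemma eH_left (k m : ℕ) (hm : m < k) (i j : Fin (2*k+1)) (hi : (i:ℕ) = m) :
    eH k i j = if (j:ℕ) = k + m then 1 else 0 := by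
  unfold eH
  by_cases h : (j:ℕ) = k + m
  · rw [if_pos h, if_pos ⟨by omega, by omega⟩, if_neg (by rintro ⟨h1, h2⟩; omega)]; ring
  · rw [if_neg h, if_neg (by rintro ⟨_, h2⟩; omega), if_neg (by rintro ⟨_, h2⟩; omega)]
    ring

lemma key (k : ℕ) (F : (Fin (2*k+1) → ℝ) →ₗ[ℝ] (Fin (2*k+1) → ℝ))
    (hF : ∀ u v : Fin (2*k+1) → ℝ, F (brH k u v) = brH k (F u) v + brH k u (F v))
    (m : ℕ) (hm : m < k) :
    F (Pi.single (Fin.last (2*k)) 1) (Fin.last (2*k))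
      = F (Pi.single (⟨m, by omega⟩ : Fin (2*k+1)) 1) ⟨m, by omega⟩
        + F (Pi.single (⟨k+m, by omega⟩ : Fin (2*k+1)) 1) ⟨k+m, by omega⟩ := by
  set p : Fin (2*k+1) := ⟨m, by omega⟩ with hp
  set q : Fin (2*k+1) := ⟨k+m, by omega⟩ with hq
  have hpv : (p : ℕ) = m := rfl
  have hqv : (q : ℕ) = k + m := rfl
  have h1 : brH k (Pi.single p 1) (Pi.single q 1)
      = (Pi.single (Fin.last (2*k)) 1 : Fin (2*k+1) → ℝ) := by
    rw [brH_eq, cH_single_left]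
    rw [Finset.sum_eq_single q]
    · rw [Pi.single_eq_same, eH_left k m hm p q hpv, if_pos hqv, one_mul, one_smul]
    · intro j _ hjq; rw [Pi.single_eq_of_ne hjq]; ring
    · intro h; exact absurd (Finset.mem_univ q) h
  have h2 : cH k (F (Pi.single p 1)) (Pi.single q 1) = F (Pi.single p 1) p := by
    rw [cH_single_right]
    rw [Finset.sum_eq_single p]
    · rw [eH_right k m hm p q hqv, if_pos hpv, mul_one]
    · intro i _ hip
      rw [eH_right k m hm i q hqv, if_neg, mul_zero]
      intro h; exact hip (Fin.ext h)
    · intro h; exact absurd (Finset.mem_univ p) h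
  have h3 : cH k (Pi.single p 1) (F (Pi.single q 1)) = F (Pi.single q 1) q := by
    rw [cH_single_left]
    rw [Finset.sum_eq_single q]
    · rw [eH_left k m hm p q hpv, if_pos hqv, mul_one]
    · intro j _ hjq
      rw [eH_left k m hm p j hpv, if_neg, mul_zero]
      intro h; exact hjq (Fin.ext h)
    · intro h; exact absurd (Finset.mem_univ q) h
  have h := hF (Pi.single p 1) (Pi.single q 1)
  rw [h1, brH_eq, brH_eq, h2, h3] at h
  have h' := congrFun h (Fin.last (2*k))
  simpa using h'

/-- `dNH k` is a derivation of `h_{2k+1}` and satisfies `trace(Dᴺ ∘ F) = trace F`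
for every derivation `F`, i.e. it is a Nikolayevsky derivation. -/
theorem stmt12 (k : ℕ) (hk : 1 ≤ k) :
    (∀ u v : Fin (2*k+1) → ℝ,
        dNH k (brH k u v) = brH k (dNH k u) v + brH k u (dNH k v)) ∧
    (∀ F : (Fin (2*k+1) → ℝ) →ₗ[ℝ] (Fin (2*k+1) → ℝ),
        (∀ u v : Fin (2*k+1) → ℝ, F (brH k u v) = brH k (F u) v + brH k u (F v)) →
        LinearMap.trace ℝ _ (dNH k ∘ₗ F) = LinearMap.trace ℝ _ F) := by
  refine ⟨part1 k, ?_⟩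
  intro F hF
  set T : ℕ → ℝ := fun m =>
    if h : m < 2*k+1 then F (Pi.single (⟨m, h⟩ : Fin (2*k+1)) 1) ⟨m, h⟩ else 0 with hT
  have hTm : ∀ i : Fin (2*k+1), T (i : ℕ) = F (Pi.single i 1) i := by
    intro i
    rw [hT]
    simp only [i.isLt, dif_pos, Fin.eta]
  have hrel : ∀ m, m < k → T (2*k) = T m + T (k+m) := by
    intro m hm
    have h := key k F hF m hm
    rw [hT]
    simp only []
    rw [dif_pos (by omega : 2*k < 2*k+1), dif_pos (by omega : m < 2*k+1),
      dif_pos (by omega : k+m < 2*k+1)]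
    exact h
  have htF : LinearMap.trace ℝ _ F = ∑ m ∈ Finset.range (2*k+1), T m := by
    rw [trace_eq_sum_diag, ← Fin.sum_univ_eq_sum_range T]
    exact Finset.sum_congr rfl fun i _ => (hTm i).symm
  have htDF : LinearMap.trace ℝ _ (dNH k ∘ₗ F)
      = ∑ m ∈ Finset.range (2*k+1),
          (if m < 2*k then ((k:ℝ)+1)/((k:ℝ)+2) else 2*((k:ℝ)+1)/((k:ℝ)+2)) * T m := by
    rw [trace_eq_sum_diag,
      ← Fin.sum_univ_eq_sum_range
        (fun m => (if m < 2*k then ((k:ℝ)+1)/((k:ℝ)+2) else 2*((k:ℝ)+1)/((k:ℝ)+2)) * T m)]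
    refine Finset.sum_congr rfl fun i _ => ?_
    rw [LinearMap.comp_apply, dNH_apply, hTm]
  have hsplit : ∑ m ∈ Finset.range (2*k), T m = (k : ℝ) * T (2*k) := by
    have e1 : ∑ m ∈ Finset.range (2*k), T m
        = ∑ m ∈ Finset.Ico 0 k, T m + ∑ m ∈ Finset.Ico k (2*k), T m := by
      rw [Finset.sum_Ico_consecutive T (Nat.zero_le k) (by omega), Finset.range_eq_Ico]
    have e2 : ∑ m ∈ Finset.Ico k (2*k), T m = ∑ m ∈ Finset.range k, T (k+m) := by
      rw [Finset.sum_Ico_eq_sum_range]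
      have : 2*k - k = k := by omega
      rw [this]
    have e3 : ∑ m ∈ Finset.Ico 0 k, T m = ∑ m ∈ Finset.range k, T m := by
      rw [Finset.range_eq_Ico]
    rw [e1, e2, e3, ← Finset.sum_add_distrib]
    have e4 : ∑ m ∈ Finset.range k, (T m + T (k+m)) = ∑ m ∈ Finset.range k, T (2*k) := by
      refine Finset.sum_congr rfl fun m hm => ?_
      exact (hrel m (Finset.mem_range.mp hm)).symm
    rw [e4, Finset.sum_const, Finset.card_range, nsmul_eq_mul]
  rw [htF, htDF, Finset.sum_range_succ, Finset.sum_range_succ, if_neg (lt_irrefl _)]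
  have e5 : ∑ m ∈ Finset.range (2*k),
      (if m < 2*k then ((k:ℝ)+1)/((k:ℝ)+2) else 2*((k:ℝ)+1)/((k:ℝ)+2)) * T m
      = (((k:ℝ)+1)/((k:ℝ)+2)) * ∑ m ∈ Finset.range (2*k), T m := by
    rw [Finset.mul_sum]
    refine Finset.sum_congr rfl fun m hm => ?_
    rw [if_pos (Finset.mem_range.mp hm)]
  rw [e5, hsplit]
  have hk2 : (k : ℝ) + 2 ≠ 0 := by positivity
  field_simp
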